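/- arXiv:2212.03070 — 2 statements merged into one kernel-verified Lean document; each statement's English description precedes it below -/
import Mathlib

section
/- Under the same setup and conditions A1–A3 as in the identifiability theorem, if h(t;λ₁,α₁,p₁) = h(t;λ₂,α₂,p₂) for all t > 0 and 0 < A(λ₁,α₁) < ∞, then (λ₁,α₁) = (λ₂,α₂); moreover if the hazard t ↦ f(t;λ₁,α₁)/(1-F(t;λ₁,α₁)) is not constant, then also p₁ = p₂. -/
open MeasureTheory Set Filter

theorem stmt_9
    (f F g : ℝ → ℝ → ℝ → ℝ) (μ : ℝ → ℝ → ℝ) (h : ℝ → ℝ → ℝ → ℝ → ℝ)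
    (A : ℝ → ℝ → EReal)
    (hpdf : ∀ l a, (∀ t ∈ Ioi (0:ℝ), 0 ≤ f l a t) ∧
      IntegrableOn (f l a) (Ioi 0) ∧ ∫ t in Ioi (0:ℝ), f l a t = 1)
    (hF : ∀ l a t, F l a t = ∫ s in Ioc (0:ℝ) t, f l a s)
    (hμ : ∀ l a, μ l a = ∫ t in Ioi (0:ℝ), t * f l a t)
    (hμpos : ∀ l a, 0 < μ l a)
    (hg : ∀ l a t, g l a t = (1 - F l a t) / μ l a)
    (hh : ∀ l a p t, h l a p t = p * f l a t + (1 - p) * g l a t)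
    (hA1 : ∀ l a, (0:EReal) ≤ A l a ∧
      Tendsto (fun t => ((f l a t / (1 - F l a t) : ℝ) : EReal)) atTop
        (nhds (A l a)))
    (hA2 : ∀ l₁ a₁ l₂ a₂, (l₁, a₁) ≠ (l₂, a₂) →
      Tendsto (fun t => f l₁ a₁ t / f l₂ a₂ t) atTop (nhds 0) ∨
        Tendsto (fun t => f l₁ a₁ t / f l₂ a₂ t) atTop atTop)
    (hA3 : ∀ l₁ a₁ l₂ a₂, (l₁, a₁) ≠ (l₂, a₂) →
      (Tendsto (fun t => f l₁ a₁ t / (1 - F l₂ a₂ t)) atTop (nhds 0) ∨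
        Tendsto (fun t => f l₁ a₁ t / (1 - F l₂ a₂ t)) atTop atTop) ∧
      (Tendsto (fun t => f l₂ a₂ t / (1 - F l₁ a₁ t)) atTop (nhds 0) ∨
        Tendsto (fun t => f l₂ a₂ t / (1 - F l₁ a₁ t)) atTop atTop))
    (l₁ a₁ p₁ l₂ a₂ p₂ : ℝ) (hp₁ : p₁ ∈ Icc (0:ℝ) 1) (hp₂ : p₂ ∈ Icc (0:ℝ) 1)
    (heq : ∀ t ∈ Ioi (0:ℝ), h l₁ a₁ p₁ t = h l₂ a₂ p₂ t)
    (hAval : (0:EReal) < A l₁ a₁ ∧ A l₁ a₁ < ⊤) :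
    l₁ = l₂ ∧ a₁ = a₂ ∧
      ((¬ ∃ c : ℝ, ∀ t ∈ Ioi (0:ℝ),
          f l₁ a₁ t / (1 - F l₁ a₁ t) = c) → p₁ = p₂) := by
  obtain ⟨hApos, hAtop⟩ := hAval
  have hAne_top : A l₁ a₁ ≠ ⊤ := hAtop.ne
  have hAne_bot : A l₁ a₁ ≠ ⊥ := by
    intro hc
    rw [hc] at hApos
    exact (not_lt.2 bot_le) hApos
  set A' : ℝ := (A l₁ a₁).toReal with hA'def
  have hAcoe : (A' : EReal) = A l₁ a₁ := EReal.coe_toReal hAne_top hAne_bot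
  have hA'pos : 0 < A' := by
    have h0 : ((0:ℝ) : EReal) < (A' : EReal) := by rw [hAcoe]; exact_mod_cast hApos
    exact_mod_cast h0
  have hA'tend : Tendsto (fun t => f l₁ a₁ t / (1 - F l₁ a₁ t)) atTop (nhds A') := by
    have h1 := (hA1 l₁ a₁).2
    rw [← hAcoe] at h1
    exact EReal.tendsto_coe.1 h1
  -- basic facts about F
  have hFmono : ∀ l a, ∀ s t : ℝ, s ≤ t → F l a s ≤ F l a t := by
    intro l a s t hst
    rw [hF, hF]
    refine setIntegral_mono_set ((hpdf l a).2.1.mono_set Ioc_subset_Ioi_self) ?_ ?_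
    · exact (ae_restrict_iff' measurableSet_Ioc).2 (ae_of_all _ fun x hx => (hpdf l a).1 x hx.1)
    · exact HasSubset.Subset.eventuallyLE (Ioc_subset_Ioc_right hst)
  have hFle1 : ∀ l a t, F l a t ≤ 1 := by
    intro l a t
    rw [hF, ← (hpdf l a).2.2]
    refine setIntegral_mono_set (hpdf l a).2.1 ?_ ?_
    · exact (ae_restrict_iff' measurableSet_Ioi).2 (ae_of_all _ fun x hx => (hpdf l a).1 x hx)
    · exact HasSubset.Subset.eventuallyLE Ioc_subset_Ioi_self
  have hSnn : ∀ l a t, (0:ℝ) ≤ 1 - F l a t := fun l a t => by linarith [hFle1 l a t]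
  -- survivor of (l₁, a₁) is everywhere positive
  have hS1pos : ∀ t : ℝ, 0 < 1 - F l₁ a₁ t := by
    intro t
    have hev : ∀ᶠ u in atTop, A' / 2 < f l₁ a₁ u / (1 - F l₁ a₁ u) :=
      hA'tend.eventually (eventually_gt_nhds (by linarith))
    obtain ⟨T, hT⟩ := hev.exists_forall_of_atTop
    have h1 : A' / 2 < f l₁ a₁ (max t T) / (1 - F l₁ a₁ (max t T)) := hT _ (le_max_right _ _)
    have h2 : (1:ℝ) - F l₁ a₁ (max t T) ≠ 0 := by
      intro h0
      rw [h0, div_zero] at h1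
      linarith
    have h3 : 0 < 1 - F l₁ a₁ (max t T) := (hSnn l₁ a₁ (max t T)).lt_of_ne (Ne.symm h2)
    have h4 := hFmono l₁ a₁ t (max t T) (le_max_left _ _)
    linarith
  have hμ₁ := hμpos l₁ a₁
  have hμ₂ := hμpos l₂ a₂
  have hpair : (l₁, a₁) = (l₂, a₂) := by
    by_contra hne
    obtain ⟨h31, h32⟩ := hA3 l₁ a₁ l₂ a₂ hne
    -- divide the mixture identity by the first survivor
    have key : (fun t => p₁ * (f l₁ a₁ t / (1 - F l₁ a₁ t)) + (1 - p₁) / μ l₁ a₁)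
        =ᶠ[atTop] (fun t => p₂ * (f l₂ a₂ t / (1 - F l₁ a₁ t))
          + ((1 - p₂) / μ l₂ a₂) * ((1 - F l₂ a₂ t) / (1 - F l₁ a₁ t))) := by
      filter_upwards [eventually_gt_atTop (0:ℝ)] with t ht
      have e := heq t ht
      rw [hh, hh, hg, hg] at e
      have hS := (hS1pos t).ne'
      have l1 : p₁ * (f l₁ a₁ t / (1 - F l₁ a₁ t)) + (1 - p₁) / μ l₁ a₁
          = (p₁ * f l₁ a₁ t + (1 - p₁) * ((1 - F l₁ a₁ t) / μ l₁ a₁)) / (1 - F l₁ a₁ t) := by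
        field_simp
      have l2 : p₂ * (f l₂ a₂ t / (1 - F l₁ a₁ t))
            + ((1 - p₂) / μ l₂ a₂) * ((1 - F l₂ a₂ t) / (1 - F l₁ a₁ t))
          = (p₂ * f l₂ a₂ t + (1 - p₂) * ((1 - F l₂ a₂ t) / μ l₂ a₂)) / (1 - F l₁ a₁ t) := by
        field_simp
      rw [l1, l2, e]
    set L : ℝ := p₁ * A' + (1 - p₁) / μ l₁ a₁ with hLdef
    have hLpos : 0 < L := by
      rw [hLdef]
      rcases lt_or_eq_of_le hp₁.2 with h1 | h1
      · have h2 : 0 < (1 - p₁) / μ l₁ a₁ := div_pos (by linarith) hμ₁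
        nlinarith [mul_nonneg hp₁.1 hA'pos.le]
      · have h2 : (0:ℝ) ≤ (1 - p₁) / μ l₁ a₁ := div_nonneg (by linarith) hμ₁.le
        nlinarith
    have hLHS : Tendsto (fun t => p₁ * (f l₁ a₁ t / (1 - F l₁ a₁ t)) + (1 - p₁) / μ l₁ a₁)
        atTop (nhds L) := by
      exact ((hA'tend.const_mul p₁).add_const _)
    have hRHS : Tendsto (fun t => p₂ * (f l₂ a₂ t / (1 - F l₁ a₁ t))
        + ((1 - p₂) / μ l₂ a₂) * ((1 - F l₂ a₂ t) / (1 - F l₁ a₁ t))) atTop (nhds L) :=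
      hLHS.congr' key
    -- the relative survivor ratio converges to a positive limit
    have hq2 : ∃ c : ℝ, 0 < c ∧
        Tendsto (fun t => (1 - F l₂ a₂ t) / (1 - F l₁ a₁ t)) atTop (nhds c) := by
      rcases h32 with h0 | htop
      · rcases lt_or_eq_of_le hp₂.2 with h1 | h1
        · -- p₂ < 1
          have hcoef : (0:ℝ) < (1 - p₂) / μ l₂ a₂ := div_pos (by linarith) hμ₂
          have h2 : Tendsto (fun t => ((1 - p₂) / μ l₂ a₂)
              * ((1 - F l₂ a₂ t) / (1 - F l₁ a₁ t))) atTop (nhds L) := by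
            have h3 := hRHS.sub (h0.const_mul p₂)
            simp only [mul_zero, sub_zero] at h3
            refine h3.congr fun t => by ring
          refine ⟨L / ((1 - p₂) / μ l₂ a₂), div_pos hLpos hcoef, ?_⟩
          have h4 := h2.div_const ((1 - p₂) / μ l₂ a₂)
          refine h4.congr fun t => mul_div_cancel_left₀ _ hcoef.ne'
        · -- p₂ = 1 : contradiction
          exfalso
          have h2 : Tendsto (fun t => p₂ * (f l₂ a₂ t / (1 - F l₁ a₁ t))
              + ((1 - p₂) / μ l₂ a₂) * ((1 - F l₂ a₂ t) / (1 - F l₁ a₁ t))) atTop (nhds 0) := by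
            have h3 := h0.const_mul p₂
            rw [mul_zero] at h3
            refine h3.congr fun t => ?_
            rw [← h1]
            ring
          exact hLpos.ne' (tendsto_nhds_unique hRHS h2)
      · rcases lt_or_eq_of_le hp₂.1 with h1 | h1
        · -- 0 < p₂ : contradiction
          exfalso
          have hge : ∀ᶠ t in atTop, p₂ * (f l₂ a₂ t / (1 - F l₁ a₁ t))
              ≤ p₂ * (f l₂ a₂ t / (1 - F l₁ a₁ t))
                + ((1 - p₂) / μ l₂ a₂) * ((1 - F l₂ a₂ t) / (1 - F l₁ a₁ t)) := by
            filter_upwards [eventually_gt_atTop (0:ℝ)] with t ht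
            have hq2nn : (0:ℝ) ≤ (1 - F l₂ a₂ t) / (1 - F l₁ a₁ t) :=
              div_nonneg (hSnn l₂ a₂ t) (hS1pos t).le
            nlinarith [mul_nonneg (div_nonneg (by linarith [hp₂.2] : (0:ℝ) ≤ 1 - p₂) hμ₂.le) hq2nn]
          have h2 : Tendsto (fun t => p₂ * (f l₂ a₂ t / (1 - F l₁ a₁ t))
              + ((1 - p₂) / μ l₂ a₂) * ((1 - F l₂ a₂ t) / (1 - F l₁ a₁ t))) atTop atTop :=
            tendsto_atTop_mono' _ hge (htop.const_mul_atTop h1)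
          exact (not_tendsto_atTop_of_tendsto_nhds hRHS) h2
        · -- p₂ = 0
          refine ⟨L * μ l₂ a₂, mul_pos hLpos hμ₂, ?_⟩
          have h2 : Tendsto (fun t => (p₂ * (f l₂ a₂ t / (1 - F l₁ a₁ t))
              + ((1 - p₂) / μ l₂ a₂) * ((1 - F l₂ a₂ t) / (1 - F l₁ a₁ t))) * μ l₂ a₂)
              atTop (nhds (L * μ l₂ a₂)) := hRHS.mul_const _
          refine h2.congr fun t => ?_
          rw [← h1]
          field_simp [(hS1pos t).ne', hμ₂.ne']
          ring
    obtain ⟨c, hc, hq2c⟩ := hq2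
    -- then f₁ / S₂ converges to the positive limit A'/c, contradicting A3
    have hS2ev : ∀ᶠ t in atTop, c / 2 < (1 - F l₂ a₂ t) / (1 - F l₁ a₁ t) :=
      hq2c.eventually (eventually_gt_nhds (by linarith))
    have hr : Tendsto (fun t => f l₁ a₁ t / (1 - F l₂ a₂ t)) atTop (nhds (A' / c)) := by
      have h1 : Tendsto (fun t => (f l₁ a₁ t / (1 - F l₁ a₁ t))
          / ((1 - F l₂ a₂ t) / (1 - F l₁ a₁ t))) atTop (nhds (A' / c)) :=
        hA'tend.div hq2c hc.ne'
      refine Tendsto.congr' ?_ h1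
      filter_upwards [hS2ev] with t ht
      have hS1 := (hS1pos t).ne'
      have hS2 : (1:ℝ) - F l₂ a₂ t ≠ 0 := by
        intro h0
        rw [h0, zero_div] at ht
        linarith
      field_simp
    rcases h31 with h0 | htop
    · exact (div_pos hA'pos hc).ne' (tendsto_nhds_unique hr h0)
    · exact (not_tendsto_atTop_of_tendsto_nhds hr) htop
  have hl : l₁ = l₂ := congrArg Prod.fst hpair
  have ha : a₁ = a₂ := congrArg Prod.snd hpair
  refine ⟨hl, ha, ?_⟩
  intro hnc
  by_contra hp
  apply hnc
  refine ⟨1 / μ l₁ a₁, fun t ht => ?_⟩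
  have e := heq t ht
  rw [hh, hh, hg, hg, ← hl, ← ha] at e
  have hps : p₁ - p₂ ≠ 0 := sub_ne_zero.2 hp
  have hfact : (p₁ - p₂) * (f l₁ a₁ t - (1 - F l₁ a₁ t) / μ l₁ a₁) = 0 := by
    linear_combination e
  have hf0 : f l₁ a₁ t = (1 - F l₁ a₁ t) / μ l₁ a₁ := by
    rcases mul_eq_zero.1 hfact with h0 | h0
    · exact absurd h0 hps
    · linarith
  rw [hf0, div_right_comm, div_self (hS1pos t).ne']
end

section
/- Let 0 ≤ Δ₁ < Δ₂ < π/2 and Δ = (Δ₁+Δ₂)/2. For η ∈ [−π, π], sup_{θ∈[Δ₁,Δ₂]} cos²(θ−η) equals 1 if η ∈ [Δ₁,Δ₂] ∪ [Δ₁−π, Δ₂−π]; equals cos²(η−Δ₂) if η ∈ [Δ₂, Δ+π/2] ∪ [Δ₂−π, Δ−π/2]; and equals cos²(η−Δ₁) if η ∈ [Δ+π/2, π] ∪ [−π, Δ₁−π] ∪ [Δ−π/2, Δ₁]. -/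
open Real Set

private lemma key_cos_sq (b x : ℝ) (h : 0 ≤ Real.sin (x + b) * Real.sin (x - b)) :
    Real.cos x ^ 2 ≤ Real.cos b ^ 2 := by
  have e1 := Real.sin_add x b
  have e2 := Real.sin_sub x b
  have p1 := Real.sin_sq_add_cos_sq x
  have p2 := Real.sin_sq_add_cos_sq b
  rw [e1, e2] at h
  nlinarith [h]

private lemma sin_nonpos_Icc (t : ℝ) (h1 : -π ≤ t) (h2 : t ≤ 0) : Real.sin t ≤ 0 := by
  have := Real.sin_nonneg_of_nonneg_of_le_pi (by linarith : (0:ℝ) ≤ -t) (by linarith)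
  rw [Real.sin_neg] at this; linarith

private lemma sin_nonpos_pi_two_pi (t : ℝ) (h1 : π ≤ t) (h2 : t ≤ 2 * π) : Real.sin t ≤ 0 := by
  have : Real.sin (t - π) = -Real.sin t := by
    rw [Real.sin_sub]; simp
  have h := Real.sin_nonneg_of_nonneg_of_le_pi (by linarith : (0:ℝ) ≤ t - π) (by linarith)
  linarith [this ▸ h]

private lemma sin_nonneg_neg_two_pi (t : ℝ) (h1 : -(2*π) ≤ t) (h2 : t ≤ -π) : 0 ≤ Real.sin t := by
  have : Real.sin (t + 2*π) = Real.sin t := by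
    rw [Real.sin_add]; simp [Real.sin_two_pi, Real.cos_two_pi]
  have h := Real.sin_nonneg_of_nonneg_of_le_pi (by linarith : (0:ℝ) ≤ t + 2*π) (by linarith)
  linarith [this ▸ h]

private lemma sin_nonneg_two_pi_three_pi (t : ℝ) (h1 : 2*π ≤ t) (h2 : t ≤ 3*π) :
    0 ≤ Real.sin t := by
  have : Real.sin (t - 2*π) = Real.sin t := by
    rw [Real.sin_sub]; simp [Real.sin_two_pi, Real.cos_two_pi]
  have h := Real.sin_nonneg_of_nonneg_of_le_pi (by linarith : (0:ℝ) ≤ t - 2*π) (by linarith)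
  linarith [this ▸ h]

private lemma sup_eq_of (Δ₁ Δ₂ η V : ℝ) (h : Δ₁ ≤ Δ₂) (θ₀ : ℝ) (hθ : θ₀ ∈ Icc Δ₁ Δ₂)
    (hval : Real.cos (θ₀ - η) ^ 2 = V)
    (hub : ∀ θ ∈ Icc Δ₁ Δ₂, Real.cos (θ - η) ^ 2 ≤ V) :
    (⨆ θ : Icc Δ₁ Δ₂, Real.cos ((θ : ℝ) - η) ^ 2) = V := by
  haveI : Nonempty (Icc Δ₁ Δ₂) := ⟨⟨Δ₁, le_refl _, h⟩⟩
  have hb : BddAbove (Set.range fun θ : Icc Δ₁ Δ₂ => Real.cos ((θ : ℝ) - η) ^ 2) := by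
    refine ⟨V, ?_⟩
    rintro y ⟨θ, rfl⟩
    exact hub θ θ.2
  apply le_antisymm
  · exact ciSup_le fun θ => hub θ θ.2
  · rw [← hval]
    exact le_ciSup hb ⟨θ₀, hθ⟩

theorem stmt_16 (Δ₁ Δ₂ : ℝ) (h1 : 0 ≤ Δ₁) (h12 : Δ₁ < Δ₂) (h2 : Δ₂ < π / 2)
    (η : ℝ) (hη : η ∈ Icc (-π) π) :
    (η ∈ Icc Δ₁ Δ₂ ∪ Icc (Δ₁ - π) (Δ₂ - π) →
      (⨆ θ : Icc Δ₁ Δ₂, Real.cos ((θ : ℝ) - η) ^ 2) = 1) ∧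
    (η ∈ Icc Δ₂ ((Δ₁ + Δ₂) / 2 + π / 2) ∪
        Icc (Δ₂ - π) ((Δ₁ + Δ₂) / 2 - π / 2) →
      (⨆ θ : Icc Δ₁ Δ₂, Real.cos ((θ : ℝ) - η) ^ 2) =
        Real.cos (η - Δ₂) ^ 2) ∧
    (η ∈ Icc ((Δ₁ + Δ₂) / 2 + π / 2) π ∪ Icc (-π) (Δ₁ - π) ∪
        Icc ((Δ₁ + Δ₂) / 2 - π / 2) Δ₁ →
      (⨆ θ : Icc Δ₁ Δ₂, Real.cos ((θ : ℝ) - η) ^ 2) =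
        Real.cos (η - Δ₁) ^ 2) := by
  have hπ := Real.pi_pos
  have hub1 : ∀ θ ∈ Icc Δ₁ Δ₂, Real.cos (θ - η) ^ 2 ≤ 1 := by
    intro θ _
    nlinarith [Real.cos_le_one (θ - η), Real.neg_one_le_cos (θ - η)]
  refine ⟨?_, ?_, ?_⟩
  · rintro (⟨ha, hb⟩ | ⟨ha, hb⟩)
    · exact sup_eq_of Δ₁ Δ₂ η 1 h12.le η ⟨ha, hb⟩ (by simp) hub1
    · refine sup_eq_of Δ₁ Δ₂ η 1 h12.le (η + π) ⟨by linarith, by linarith⟩ ?_ hub1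
      have : η + π - η = π := by ring
      rw [this, Real.cos_pi]; norm_num
  · have hcos : Real.cos (Δ₂ - η) ^ 2 = Real.cos (η - Δ₂) ^ 2 := by
      rw [← Real.cos_neg (Δ₂ - η)]; ring_nf
    rintro (⟨ha, hb⟩ | ⟨ha, hb⟩)
    · refine sup_eq_of Δ₁ Δ₂ η _ h12.le Δ₂ ⟨h12.le, le_refl _⟩ hcos ?_
      intro θ ⟨ht1, ht2⟩
      refine le_trans (key_cos_sq _ _ ?_) hcos.le
      have s1 : Real.sin (θ - η + (Δ₂ - η)) ≤ 0 :=
        sin_nonpos_Icc _ (by linarith) (by linarith)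
      have s2 : Real.sin (θ - η - (Δ₂ - η)) ≤ 0 := by
        have : θ - η - (Δ₂ - η) = θ - Δ₂ := by ring
        rw [this]; exact sin_nonpos_Icc _ (by linarith) (by linarith)
      nlinarith [s1, s2]
    · refine sup_eq_of Δ₁ Δ₂ η _ h12.le Δ₂ ⟨h12.le, le_refl _⟩ hcos ?_
      intro θ ⟨ht1, ht2⟩
      refine le_trans (key_cos_sq _ _ ?_) hcos.le
      have s1 : Real.sin (θ - η + (Δ₂ - η)) ≤ 0 :=
        sin_nonpos_pi_two_pi _ (by linarith) (by linarith)
      have s2 : Real.sin (θ - η - (Δ₂ - η)) ≤ 0 := by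
        have : θ - η - (Δ₂ - η) = θ - Δ₂ := by ring
        rw [this]; exact sin_nonpos_Icc _ (by linarith) (by linarith)
      nlinarith [s1, s2]
  · have hcos : Real.cos (Δ₁ - η) ^ 2 = Real.cos (η - Δ₁) ^ 2 := by
      rw [← Real.cos_neg (Δ₁ - η)]; ring_nf
    rintro ((⟨ha, hb⟩ | ⟨ha, hb⟩) | ⟨ha, hb⟩)
    · refine sup_eq_of Δ₁ Δ₂ η _ h12.le Δ₁ ⟨le_refl _, h12.le⟩ hcos ?_
      intro θ ⟨ht1, ht2⟩
      refine le_trans (key_cos_sq _ _ ?_) hcos.le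
      have s1 : 0 ≤ Real.sin (θ - η + (Δ₁ - η)) :=
        sin_nonneg_neg_two_pi _ (by linarith) (by linarith)
      have s2 : 0 ≤ Real.sin (θ - η - (Δ₁ - η)) := by
        have : θ - η - (Δ₁ - η) = θ - Δ₁ := by ring
        rw [this]; exact Real.sin_nonneg_of_nonneg_of_le_pi (by linarith) (by linarith)
      exact mul_nonneg s1 s2
    · refine sup_eq_of Δ₁ Δ₂ η _ h12.le Δ₁ ⟨le_refl _, h12.le⟩ hcos ?_
      intro θ ⟨ht1, ht2⟩
      refine le_trans (key_cos_sq _ _ ?_) hcos.le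
      have s1 : 0 ≤ Real.sin (θ - η + (Δ₁ - η)) :=
        sin_nonneg_two_pi_three_pi _ (by linarith) (by linarith)
      have s2 : 0 ≤ Real.sin (θ - η - (Δ₁ - η)) := by
        have : θ - η - (Δ₁ - η) = θ - Δ₁ := by ring
        rw [this]; exact Real.sin_nonneg_of_nonneg_of_le_pi (by linarith) (by linarith)
      exact mul_nonneg s1 s2
    · refine sup_eq_of Δ₁ Δ₂ η _ h12.le Δ₁ ⟨le_refl _, h12.le⟩ hcos ?_
      intro θ ⟨ht1, ht2⟩
      refine le_trans (key_cos_sq _ _ ?_) hcos.le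
      have s1 : 0 ≤ Real.sin (θ - η + (Δ₁ - η)) :=
        Real.sin_nonneg_of_nonneg_of_le_pi (by linarith) (by linarith)
      have s2 : 0 ≤ Real.sin (θ - η - (Δ₁ - η)) := by
        have : θ - η - (Δ₁ - η) = θ - Δ₁ := by ring
        rw [this]; exact Real.sin_nonneg_of_nonneg_of_le_pi (by linarith) (by linarith)
      exact mul_nonneg s1 s2
end
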